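/- Every central extension of 𝔤̌ of the form [L_m,L_n]=(m-n)L_{m+n}+f(m,n)z, [J_m,J_n]=g(m,n)z, [Θ_m,Θ_n]=h(m,n)z (z central, other brackets unmodified) satisfies, after equivalence: f(m,n) = (α/12)m(m²-1)δ_{m+n,0}, g(m,n) = βmδ_{m+n,0}, h(m,n) = 0 for some constants α, β ∈ ℂ. -/

import Mathlib

/-- Classification of central extensions of the novel algebra `𝔤̌`: every central
extension of the form `[L_m,L_n] = (m-n)L_{m+n} + f(m,n)z`, `[J_m,J_n] = g(m,n)z`,
`[Θ_m,Θ_n] = h(m,n)z` is, up to equivalence (a coboundary `φ` in the `L`-sector),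
given by the Virasoro cocycle with charge `α`, the Heisenberg cocycle with charge
`β`, and `h = 0`. -/
theorem stmt17 (f g h : ℤ → ℤ → ℂ)
    (hf_anti : ∀ m n : ℤ, f m n = - f n m)
    (hg_anti : ∀ m n : ℤ, g m n = - g n m)
    (hf : ∀ m n k : ℤ,
      ((n - k : ℤ) : ℂ) * f m (n + k) + ((k - m : ℤ) : ℂ) * f n (k + m)
        + ((m - n : ℤ) : ℂ) * f k (m + n) = 0)
    (hg : ∀ m n k : ℤ,
      (k : ℂ) * g n (m + k) - (n : ℂ) * g k (m + n) = 0)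
    (hh1 : ∀ m n k : ℤ,
      ((2 * m - k : ℤ) : ℂ) * h n (m + k) - ((2 * m - n : ℤ) : ℂ) * h k (m + n) = 0)
    (hh2 : ∀ m n k : ℤ, h k (m + n) = 0) :
    ∃ (α β : ℂ) (φ : ℤ → ℂ),
      (∀ m n : ℤ, f m n =
        (α / 12) * ((m * (m ^ 2 - 1) : ℤ) : ℂ) * (if m + n = 0 then 1 else 0)
          + ((m - n : ℤ) : ℂ) * φ (m + n)) ∧
      (∀ m n : ℤ, g m n = β * (m : ℂ) * (if m + n = 0 then 1 else 0)) ∧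
      (∀ m n : ℤ, h m n = 0) := by
  -- h vanishes
  have hzero : ∀ m n : ℤ, h m n = 0 := fun m n => by simpa using hh2 0 n m
  -- relation g n s = n * g 1 (n+s-1)
  have gkey : ∀ n s : ℤ, g n s = (n : ℂ) * g 1 (n + s - 1) := by
    intro n s
    have := hg (s - 1) n 1
    have e1 : (s - 1 : ℤ) + 1 = s := by ring
    have e2 : (s - 1 : ℤ) + n = n + s - 1 := by ring
    rw [e1, e2] at this
    push_cast at this
    linear_combination this
  have gvanish : ∀ n s : ℤ, n + s ≠ 0 → g n s = 0 := by
    intro n s hns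
    have h1 := gkey n s
    have h2 := gkey s n
    have h3 : g n s = - g s n := hg_anti n s
    have e : s + n - 1 = n + s - 1 := by ring
    rw [e] at h2
    have hsum : ((n : ℂ) + s) * g 1 (n + s - 1) = 0 := by
      linear_combination h3 - h1 - h2
    have hns' : ((n : ℂ) + s) ≠ 0 := by
      intro hc
      apply hns
      have : ((n + s : ℤ) : ℂ) = 0 := by push_cast; linear_combination hc
      exact_mod_cast this
    rcases mul_eq_zero.mp hsum with hcon | h4
    · exact absurd hcon hns'
    · rw [h1, h4]; ring
  -- relation (m+n) f m n = (n-m) f 0 (m+n)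
  have frel : ∀ m n : ℤ, ((m + n : ℤ) : ℂ) * f m n = ((n - m : ℤ) : ℂ) * f 0 (m + n) := by
    intro m n
    have := hf m n 0
    have e1 : (n : ℤ) + 0 = n := by ring
    have e2 : (0 : ℤ) + m = m := by ring
    rw [e1, e2] at this
    rw [hf_anti n m] at this
    push_cast at this ⊢
    linear_combination this
  -- diagonal recursion
  have hrec : ∀ m n : ℤ, ((m + 2 * n : ℤ) : ℂ) * f m (-m) - ((2 * m + n : ℤ) : ℂ) * f n (-n)
      = ((m - n : ℤ) : ℂ) * f (m + n) (-(m + n)) := by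
    intro m n
    have := hf m n (-(m + n))
    have e1 : n + -(m + n) = -m := by ring
    have e2 : -(m + n) + m = -n := by ring
    rw [e1, e2] at this
    rw [hf_anti (-(m+n)) (m+n)] at this
    push_cast at this ⊢
    linear_combination this
  obtain ⟨α, hα⟩ : ∃ α : ℂ, α = 2 * (f 2 (-2) - 2 * f 1 (-1)) := ⟨_, rfl⟩
  have key : ∀ p : ℕ, f (p : ℤ) (-(p : ℤ)) = α * ((p : ℂ) ^ 3 - (p : ℂ)) / 12 + (p : ℂ) * f 1 (-1) := by
    intro p
    induction p using Nat.strong_induction_on with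
    | _ p ih =>
      match p with
      | 0 =>
        have h0 : f 0 0 = 0 := by linear_combination (hf_anti 0 0) / 2
        push_cast
        simpa using h0
      | 1 => push_cast; ring
      | 2 => push_cast; rw [hα, show ((-2 : ℤ)) = -(2:ℤ) from rfl, show ((-1:ℤ)) = -(1:ℤ) from rfl]; ring
      | (k + 3) =>
        have h1 := ih (k + 2) (by omega)
        have hr := hrec ((k : ℤ) + 2) 1
        have hk1 : ((k : ℂ) + 1) ≠ 0 := by
          have : ((k + 1 : ℕ) : ℂ) ≠ 0 := Nat.cast_ne_zero.mpr (by omega)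
          push_cast at this; exact this
        rw [show ((k : ℤ) + 2) + 1 = (k : ℤ) + 3 from by ring] at hr
        push_cast at hr h1 ⊢
        have goal' : ((k : ℂ) + 1) * f ((k : ℤ) + 3) (-((k : ℤ) + 3))
            = ((k : ℂ) + 1) * (α * (((k : ℂ) + 3) ^ 3 - ((k : ℂ) + 3)) / 12
                + ((k : ℂ) + 3) * f 1 (-1)) := by
          linear_combination ((k : ℂ) + 4) * h1 - hr
        exact mul_left_cancel₀ hk1 goal'
  have keyZ : ∀ m : ℤ, f m (-m) = α * ((m : ℂ) ^ 3 - (m : ℂ)) / 12 + (m : ℂ) * f 1 (-1) := by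
    intro m
    rcases le_or_gt 0 m with hm | hm
    · obtain ⟨p, rfl⟩ := Int.eq_ofNat_of_zero_le hm
      exact key p
    · obtain ⟨p, rfl⟩ : ∃ p : ℕ, m = -(p : ℤ) := ⟨(-m).toNat, by omega⟩
      rw [neg_neg, hf_anti, key p]
      push_cast
      ring
  refine ⟨α, g 1 (-1), fun s => if s = 0 then f 1 (-1) / 2 else - f 0 s / (s : ℂ), ?_, ?_, hzero⟩
  · intro m n
    by_cases hmn : m + n = 0
    · have hn : n = -m := by omega
      subst hn
      simp only [hmn, if_pos]
      rw [keyZ m]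
      push_cast
      ring
    · simp only [hmn, if_neg, if_false, ite_false]
      have hr := frel m n
      have hmn' : ((m + n : ℤ) : ℂ) ≠ 0 := by
        exact_mod_cast (Int.cast_ne_zero (α := ℂ)).mpr hmn
      push_cast at hr hmn' ⊢
      field_simp
      linear_combination 12 * hr
  · intro m n
    by_cases hmn : m + n = 0
    · have hn : n = -m := by omega
      subst hn
      simp only [hmn, if_pos, mul_one]
      have hgk := gkey m (-m)
      rw [show m + -m - 1 = (-1 : ℤ) from by ring] at hgk
      rw [hgk]; ring
    · rw [if_neg hmn, gvanish m n hmn]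
      ring
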